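/- arXiv:2105.04486 — 5 statements merged into one kernel-verified Lean document; each statement's English description precedes it below -/
import Mathlib

section
/- Let D be a finite set equipped with a score function S : D → ℝ and let k be a positive integer with k ≤ |D|. Let D_l ⊆ D, and let A_l ⊆ D_l be a subset with |A_l| = k such that S(a) ≥ S(b) for every a ∈ A_l and every b ∈ D_l \ A_l (i.e., A_l is a top-k answer set of D_l). Then for every t ∈ D_l \ A_l there exists a top-k answer set A of D with t ∉ A; that is, any element of D_l not in A_l can be safely pruned. -/
/-- `A` is a top-`k` answer set of `D` w.r.t. score function `S`:
`A ⊆ D`, `|A| = k`, and every element of `A` scores at least as high as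
every element of `D \ A`. -/
def IsTopK {α : Type*} [DecidableEq α] (S : α → ℝ) (D : Finset α) (k : ℕ)
    (A : Finset α) : Prop :=
  A ⊆ D ∧ A.card = k ∧ ∀ a ∈ A, ∀ b ∈ D \ A, S b ≤ S a

lemma exists_topK {α : Type*} [DecidableEq α] (S : α → ℝ) :
    ∀ (k : ℕ) (D : Finset α), k ≤ D.card → ∃ A, IsTopK S D k A := by
  intro k
  induction k with
  | zero =>
    intro D _
    exact ⟨∅, by simp [IsTopK]⟩
  | succ n ih =>
    intro D hk
    have hne : D.Nonempty := Finset.card_pos.mp (by omega)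
    obtain ⟨m, hmD, hm⟩ := Finset.exists_max_image D S hne
    have h' : n ≤ (D.erase m).card := by
      rw [Finset.card_erase_of_mem hmD]; omega
    obtain ⟨A, hAsub, hAcard, hAtop⟩ := ih (D.erase m) h'
    have hmA : m ∉ A := fun h => (Finset.mem_erase.mp (hAsub h)).1 rfl
    refine ⟨insert m A, ?_, ?_, ?_⟩
    · intro x hx
      rcases Finset.mem_insert.mp hx with rfl | hx
      · exact hmD
      · exact Finset.mem_of_mem_erase (hAsub hx)
    · rw [Finset.card_insert_of_notMem hmA, hAcard]
    · intro a ha b hb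
      obtain ⟨hbD, hbA⟩ := Finset.mem_sdiff.mp hb
      rcases Finset.mem_insert.mp ha with rfl | ha
      · exact hm b hbD
      · refine hAtop a ha b (Finset.mem_sdiff.mpr ⟨Finset.mem_erase.mpr ⟨?_, hbD⟩, ?_⟩)
        · rintro rfl; exact hbA (Finset.mem_insert_self _ _)
        · exact fun h => hbA (Finset.mem_insert_of_mem h)

/-- any element of `D_l` not in the local top-k answer set `A_l`
can be safely pruned: it is outside some top-k answer set of `D`. -/
theorem stmt_0 {α : Type*} [DecidableEq α] (S : α → ℝ) (D : Finset α)
    (k : ℕ) (hk : 0 < k) (hkD : k ≤ D.card)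
    (Dl Al : Finset α) (hDl : Dl ⊆ D) (hAlsub : Al ⊆ Dl) (hAlcard : Al.card = k)
    (hAltop : ∀ a ∈ Al, ∀ b ∈ Dl \ Al, S b ≤ S a) :
    ∀ t ∈ Dl \ Al, ∃ A : Finset α, IsTopK S D k A ∧ t ∉ A := by
  intro t ht
  obtain ⟨htDl, htAl⟩ := Finset.mem_sdiff.mp ht
  obtain ⟨A0, hA0sub, hA0card, hA0top⟩ := exists_topK S k D hkD
  by_cases htA : t ∈ A0
  · -- find a ∈ Al \ A0
    have hnotsub : ¬ Al ⊆ A0 := by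
      intro hsub
      have : (insert t Al).card ≤ A0.card :=
        Finset.card_le_card (Finset.insert_subset htA hsub)
      rw [Finset.card_insert_of_notMem htAl, hAlcard, hA0card] at this
      omega
    obtain ⟨a, haAl, haA0⟩ := Finset.not_subset.mp hnotsub
    have haD : a ∈ D := hDl (hAlsub haAl)
    have hta : S t ≤ S a := hAltop a haAl t ht
    have hat : S a ≤ S t := hA0top t htA a (Finset.mem_sdiff.mpr ⟨haD, haA0⟩)
    have heq : S a = S t := le_antisymm hat hta
    have htne : t ≠ a := fun h => htAl (h ▸ haAl)
    refine ⟨insert a (A0.erase t), ⟨?_, ?_, ?_⟩, ?_⟩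
    · intro x hx
      rcases Finset.mem_insert.mp hx with rfl | hx
      · exact haD
      · exact hA0sub (Finset.mem_of_mem_erase hx)
    · have : a ∉ A0.erase t := fun h => haA0 (Finset.mem_of_mem_erase h)
      rw [Finset.card_insert_of_notMem this, Finset.card_erase_of_mem htA, hA0card]
      omega
    · intro x hx b hb
      obtain ⟨hbD, hbA'⟩ := Finset.mem_sdiff.mp hb
      have hxA0 : S a ≤ S x ∧ S t ≤ S x ∨ x = a := by
        rcases Finset.mem_insert.mp hx with rfl | hx
        · exact Or.inr rfl
        · have hx0 : x ∈ A0 := Finset.mem_of_mem_erase hx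
          have h1 : S a ≤ S x := hA0top x hx0 a (Finset.mem_sdiff.mpr ⟨haD, haA0⟩)
          exact Or.inl ⟨h1, heq ▸ h1⟩
      by_cases hbA0 : b ∈ A0
      · -- then b = t
        have hbt : b = t := by
          by_contra hbt
          exact hbA' (Finset.mem_insert_of_mem (Finset.mem_erase.mpr ⟨hbt, hbA0⟩))
        subst hbt
        rcases hxA0 with ⟨_, h2⟩ | rfl
        · exact h2
        · exact hta
      · have hbA : S b ≤ S t := by
          have := hA0top t htA b (Finset.mem_sdiff.mpr ⟨hbD, hbA0⟩)
          exact this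
        rcases hxA0 with ⟨h1, _⟩ | rfl
        · exact hbA.trans (heq ▸ h1)
        · exact hbA.trans heq.ge
    · intro h
      rcases Finset.mem_insert.mp h with h | h
      · exact htne h
      · exact (Finset.mem_erase.mp h).1 rfl
  · exact ⟨A0, ⟨hA0sub, hA0card, hA0top⟩, htA⟩
end

section
/- Let D be a finite set equipped with a score function S : D → ℝ, let k be a positive integer with k ≤ |D|, and let τ_1, …, τ_N be real numbers. Suppose that for each l ∈ {1,…,N} there exist k pairwise distinct elements t of D with S(t) ≥ τ_l. Then every o ∈ D with S(o) < max_{1≤l≤N} τ_l belongs to no top-k answer set of D; that is, the maximum of the per-partition pruning thresholds is itself a valid pruning threshold. -/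
/-- if for each partition threshold `τ l` there are `k` pairwise
distinct elements of `D` with score at least `τ l`, then any `o ∈ D` scoring
below `max_l τ l` belongs to no top-k answer set of `D`. -/
theorem stmt_9 {α : Type*} [DecidableEq α] (S : α → ℝ) (D : Finset α)
    (k : ℕ) (hk : 0 < k) (hkD : k ≤ D.card)
    (N : ℕ) (hN : 0 < N) (τ : Fin N → ℝ)
    (hcand : ∀ l : Fin N, ∃ T : Finset α, T ⊆ D ∧ T.card = k ∧ ∀ c ∈ T, τ l ≤ S c) :
    ∀ o ∈ D,
      S o < Finset.univ.sup' (Finset.univ_nonempty_iff.mpr ⟨⟨0, hN⟩⟩) τ →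
        ∀ A : Finset α, IsTopK S D k A → o ∉ A := by
  intro o hoD ho A hA hoA
  obtain ⟨l, -, hl⟩ := Finset.exists_mem_eq_sup' (Finset.univ_nonempty_iff.mpr ⟨⟨0, hN⟩⟩) τ
  rw [hl] at ho
  obtain ⟨T, hTD, hTk, hTS⟩ := hcand l
  obtain ⟨hAD, hAk, hAtop⟩ := hA
  -- T is not a subset of A, since o ∈ A has S o < τ l ≤ S c for c ∈ T
  have hnot : ¬ T ⊆ A := by
    intro hTA
    have : T = A := Finset.eq_of_subset_of_card_le hTA (by rw [hAk, hTk])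
    exact absurd (hTS o (this ▸ hoA)) (not_le.mpr ho)
  obtain ⟨t, htT, htA⟩ := Finset.not_subset.mp hnot
  have := hAtop o hoA t (Finset.mem_sdiff.mpr ⟨hTD htT, htA⟩)
  exact absurd (le_trans (hTS t htT) this) (not_le.mpr ho)
end

section
/- Let D be a finite set equipped with a score function S : D → ℝ, let k be a positive integer with k ≤ |D|, and let τ ∈ ℝ. Suppose there exist k pairwise distinct elements t^(1), …, t^(k) of D with S(t^(i)) ≥ τ for every i. Then for every t ∈ D \ {t^(1), …, t^(k)} with S(t) ≤ τ there exists a top-k answer set A of D with t ∉ A; that is, pruning any element whose score upper bound does not exceed the threshold τ still leaves at least one valid top-k answer set intact. -/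
/-- Any finset with at least `k` elements has a subset of size `k` whose
elements dominate the rest. -/
lemma exists_topk_aux {α : Type*} [DecidableEq α] (S : α → ℝ) :
    ∀ (k : ℕ) (E : Finset α), k ≤ E.card →
      ∃ A : Finset α, A ⊆ E ∧ A.card = k ∧ ∀ a ∈ A, ∀ b ∈ E \ A, S b ≤ S a := by
  intro k
  induction k with
  | zero => intro E _; exact ⟨∅, by simp⟩
  | succ n ih =>
    intro E hE
    have hne : E.Nonempty := Finset.card_pos.mp (by omega)
    obtain ⟨a, haE, hamax⟩ := Finset.exists_max_image E S hne
    have hcard : n ≤ (E.erase a).card := by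
      rw [Finset.card_erase_of_mem haE]; omega
    obtain ⟨A', hA'sub, hA'card, hA'top⟩ := ih (E.erase a) hcard
    have haA' : a ∉ A' := fun h => (Finset.mem_erase.mp (hA'sub h)).1 rfl
    refine ⟨insert a A', ?_, ?_, ?_⟩
    · exact Finset.insert_subset haE (hA'sub.trans (Finset.erase_subset _ _))
    · rw [Finset.card_insert_of_notMem haA', hA'card]
    · intro x hx b hb
      rw [Finset.mem_sdiff, Finset.mem_insert, not_or] at hb
      rcases Finset.mem_insert.mp hx with rfl | hxA'
      · exact hamax b hb.1
      · exact hA'top x hxA' b (Finset.mem_sdiff.mpr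
          ⟨Finset.mem_erase.mpr ⟨hb.2.1, hb.1⟩, hb.2.2⟩)

/-- if `T` consists of `k` pairwise distinct elements of `D`
whose scores are at least `τ`, then any element of `D` outside `T` with score
at most `τ` can be pruned while still leaving some valid top-k answer set
intact. -/
theorem stmt_10 {α : Type*} [DecidableEq α] (S : α → ℝ) (D : Finset α)
    (k : ℕ) (hk : 0 < k) (hkD : k ≤ D.card)
    (τ : ℝ) (T : Finset α) (hT : T ⊆ D) (hTcard : T.card = k)
    (hTscore : ∀ c ∈ T, τ ≤ S c) :
    ∀ t ∈ D \ T, S t ≤ τ → ∃ A : Finset α, IsTopK S D k A ∧ t ∉ A := by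
  intro t ht hSt
  rw [Finset.mem_sdiff] at ht
  have hTsub : T ⊆ D.erase t := fun c hc =>
    Finset.mem_erase.mpr ⟨fun h => ht.2 (h ▸ hc), hT hc⟩
  have hk' : k ≤ (D.erase t).card := hTcard ▸ Finset.card_le_card hTsub
  obtain ⟨A, hAsub, hAcard, hAtop⟩ := exists_topk_aux S k (D.erase t) hk'
  have htA : t ∉ A := fun h => (Finset.mem_erase.mp (hAsub h)).1 rfl
  -- Every element of A has score ≥ τ
  have hAτ : ∀ a ∈ A, τ ≤ S a := by
    intro a ha
    by_cases hTA : T ⊆ A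
    · have : T = A := Finset.eq_of_subset_of_card_le hTA (by omega)
      exact hTscore a (this ▸ ha)
    · obtain ⟨c, hcT, hcA⟩ := Finset.not_subset.mp hTA
      exact le_trans (hTscore c hcT)
        (hAtop a ha c (Finset.mem_sdiff.mpr ⟨hTsub hcT, hcA⟩))
  refine ⟨A, ⟨hAsub.trans (Finset.erase_subset _ _), hAcard, ?_⟩, htA⟩
  intro a ha b hb
  rw [Finset.mem_sdiff] at hb
  by_cases hbt : b = t
  · exact hbt ▸ le_trans hSt (hAτ a ha)
  · exact hAtop a ha b (Finset.mem_sdiff.mpr ⟨Finset.mem_erase.mpr ⟨hbt, hb.1⟩, hb.2⟩)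
end

section
/- Let D be a finite set equipped with a score function S : D → ℝ, let k be a positive integer with k ≤ |D|, and let D = D_1 ∪ … ∪ D_N be a partition of D into pairwise disjoint blocks. For each l ∈ {1,…,N}, let A_l ⊆ D_l be a subset with |A_l| = min(k, |D_l|) such that S(a) ≥ S(b) for every a ∈ A_l and every b ∈ D_l \ A_l. Then there exists a top-k answer set A of D with A ⊆ A_1 ∪ … ∪ A_N; that is, the union of the per-partition top-k candidate sets contains a complete set of top-k answers for the whole database. -/
/-- Any finset of size at least `k` has a top-`k` answer set. -/
lemma exists_isTopK {α : Type*} [DecidableEq α] (S : α → ℝ) (T : Finset α) (k : ℕ)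
    (hk : k ≤ T.card) : ∃ A, IsTopK S T k A := by
  obtain ⟨A0, hA0sub, hA0card⟩ := Finset.exists_subset_card_eq hk
  have hne : (T.powersetCard k).Nonempty :=
    ⟨A0, Finset.mem_powersetCard.2 ⟨hA0sub, hA0card⟩⟩
  obtain ⟨A, hA, hmax⟩ := Finset.exists_max_image (T.powersetCard k)
    (fun A => ∑ a ∈ A, S a) hne
  obtain ⟨hAsub, hAcard⟩ := Finset.mem_powersetCard.1 hA
  refine ⟨A, hAsub, hAcard, ?_⟩
  intro a ha b hb
  rw [Finset.mem_sdiff] at hb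
  by_contra hlt
  push_neg at hlt
  set A' := insert b (A.erase a) with hA'
  have hbne : b ∉ A.erase a := fun h => hb.2 (Finset.mem_of_mem_erase h)
  have hA'card : A'.card = k := by
    have hk0 : 0 < k := hAcard ▸ Finset.card_pos.2 ⟨a, ha⟩
    rw [hA', Finset.card_insert_of_notMem hbne, Finset.card_erase_of_mem ha, hAcard]
    omega
  have hA'sub : A' ⊆ T := by
    intro x hx
    rcases Finset.mem_insert.1 hx with h | h
    · exact h ▸ hb.1
    · exact hAsub (Finset.mem_of_mem_erase h)
  have hle := hmax A' (Finset.mem_powersetCard.2 ⟨hA'sub, hA'card⟩)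
  have hsum : ∑ x ∈ A', S x = S b + (∑ x ∈ A, S x - S a) := by
    rw [hA', Finset.sum_insert hbne]
    have := Finset.sum_erase_add A S ha
    linarith
  rw [hsum] at hle
  linarith

/-- if `D` is partitioned into pairwise disjoint blocks
`Dl 1, …, Dl N`, and `Al l` is a top-`min k |Dl l|` answer set of block
`Dl l`, then the union of the per-partition candidate sets contains a
complete top-k answer set of `D`. -/
theorem stmt_13 {α : Type*} [DecidableEq α] (S : α → ℝ) (D : Finset α)
    (k : ℕ) (hk : 0 < k) (hkD : k ≤ D.card)
    (N : ℕ) (Dl : Fin N → Finset α)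
    (hdisj : ∀ l l' : Fin N, l ≠ l' → Disjoint (Dl l) (Dl l'))
    (hunion : Finset.univ.biUnion Dl = D)
    (Al : Fin N → Finset α)
    (hAlsub : ∀ l, Al l ⊆ Dl l)
    (hAlcard : ∀ l, (Al l).card = min k (Dl l).card)
    (hAltop : ∀ l, ∀ a ∈ Al l, ∀ b ∈ Dl l \ Al l, S b ≤ S a) :
    ∃ A : Finset α, IsTopK S D k A ∧ A ⊆ Finset.univ.biUnion Al := by
  set U := Finset.univ.biUnion Al with hU
  have hUsubD : U ⊆ D := by
    rw [← hunion]
    intro x hx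
    rw [Finset.mem_biUnion] at hx ⊢
    obtain ⟨l, _, hl⟩ := hx
    exact ⟨l, Finset.mem_univ l, hAlsub l hl⟩
  have hkU : k ≤ U.card := by
    by_cases h : ∃ l, k ≤ (Dl l).card
    · obtain ⟨l, hl⟩ := h
      have h1 : (Al l).card = k := by rw [hAlcard l]; omega
      have h2 : Al l ⊆ U := fun x hx =>
        Finset.mem_biUnion.2 ⟨l, Finset.mem_univ l, hx⟩
      calc k = (Al l).card := h1.symm
        _ ≤ U.card := Finset.card_le_card h2
    · push_neg at h
      have hAleq : ∀ l, Al l = Dl l := by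
        intro l
        apply Finset.eq_of_subset_of_card_le (hAlsub l)
        rw [hAlcard l]
        have := h l
        omega
      have : U = D := by
        rw [hU, ← hunion]
        congr 1
        ext l
        rw [hAleq l]
      rw [this]; exact hkD
  obtain ⟨A, hAsub, hAcard, hAtop⟩ := exists_isTopK S U k hkU
  refine ⟨A, ⟨hAsub.trans hUsubD, hAcard, ?_⟩, hAsub⟩
  intro a ha b hb
  rw [Finset.mem_sdiff] at hb
  by_cases hbU : b ∈ U
  · exact hAtop a ha b (Finset.mem_sdiff.2 ⟨hbU, hb.2⟩)
  · -- b ∈ D but not in any Al; find its block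
    have hbD : b ∈ Finset.univ.biUnion Dl := hunion ▸ hb.1
    obtain ⟨l, _, hbl⟩ := Finset.mem_biUnion.1 hbD
    have hbAl : b ∉ Al l := fun h =>
      hbU (Finset.mem_biUnion.2 ⟨l, Finset.mem_univ l, h⟩)
    have hblA : b ∈ Dl l \ Al l := Finset.mem_sdiff.2 ⟨hbl, hbAl⟩
    have hAllcard : (Al l).card = k := by
      rcases Nat.lt_or_ge (Dl l).card k with h | h
      · exfalso
        have : Al l = Dl l := Finset.eq_of_subset_of_card_le (hAlsub l)
          (by rw [hAlcard l]; omega)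
        exact hbAl (this ▸ hbl)
      · rw [hAlcard l]; omega
    by_cases hAlA : Al l ⊆ A
    · have : Al l = A := Finset.eq_of_subset_of_card_le hAlA (by omega)
      exact hAltop l a (this ▸ ha) b hblA
    · obtain ⟨c, hcAl, hcA⟩ := Finset.not_subset.1 hAlA
      have hcU : c ∈ U := Finset.mem_biUnion.2 ⟨l, Finset.mem_univ l, hcAl⟩
      have h1 : S b ≤ S c := hAltop l c hcAl b hblA
      have h2 : S c ≤ S a := hAtop a ha c (Finset.mem_sdiff.2 ⟨hcU, hcA⟩)
      linarith
end

section
/- Let D be a finite set equipped with a score function S : D → ℝ and let k be a positive integer with k ≤ |D|. Let C ⊆ D be a candidate set together with a real number LB(c) ≤ S(c) for each c ∈ C, and let τ ∈ ℝ be such that at least k elements c ∈ C satisfy LB(c) ≥ τ (i.e., τ does not exceed the k-th largest lower bound among the candidates). Then every o ∈ D with S(o) < τ belongs to no top-k answer set of D. -/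
open scoped Classical

/-- if at least `k` candidates in `C ⊆ D` have score lower
bounds at least `τ`, then any `o ∈ D` with `S o < τ` belongs to no top-k
answer set of `D`. -/
theorem stmt_14 {α : Type*} [DecidableEq α] (S : α → ℝ) (D : Finset α)
    (k : ℕ) (hk : 0 < k) (hkD : k ≤ D.card)
    (C : Finset α) (hC : C ⊆ D)
    (LB : α → ℝ) (hLB : ∀ c ∈ C, LB c ≤ S c)
    (τ : ℝ) (hτ : k ≤ (C.filter (fun c => τ ≤ LB c)).card) :
    ∀ o ∈ D, S o < τ → ∀ A : Finset α, IsTopK S D k A → o ∉ A := by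
  intro o hoD ho A ⟨hAD, hAk, htop⟩ hoA
  set F := C.filter (fun c => τ ≤ LB c)
  have hcard : (A.erase o).card < F.card := by
    have := Finset.card_erase_of_mem hoA
    omega
  obtain ⟨c, hcF, hcA⟩ := Finset.not_subset.mp
    (fun h => absurd (Finset.card_le_card h) (not_le.mpr hcard))
  have hcC : c ∈ C := Finset.mem_of_mem_filter _ hcF
  have hτc : τ ≤ LB c := (Finset.mem_filter.mp hcF).2
  have hSc : τ ≤ S c := hτc.trans (hLB c hcC)
  rcases eq_or_ne c o with rfl | hne
  · exact absurd hSc (not_le.mpr ho)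
  · have hcnA : c ∉ A := fun h => hcA (Finset.mem_erase.mpr ⟨hne, h⟩)
    have := htop o hoA c (Finset.mem_sdiff.mpr ⟨hC hcC, hcnA⟩)
    linarith
end
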